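/- Let A be a Banach algebra and let J ⊆ A be a closed two-sided ideal, and let A/J be the quotient Banach algebra with the quotient norm. If multiplication in A is open, then multiplication in A/J is open; if multiplication in A is uniformly open (with modulus δ(ε)), then multiplication in A/J is uniformly open (with the same modulus δ(ε)); and if multiplication in A is weakly open, then multiplication in A/J is weakly open. -/

import Mathlib

open Pointwise

/-- Openness, uniform openness (with the same modulus `δ(ε)`), and weak openness of
multiplication all pass from a Banach algebra `A` to a quotient `A/J` by a closed
two-sided ideal.  The quotient Banach algebra `A/J` is modelled as a Banach algebra `B`
together with a surjective ring homomorphism `π : A →+* B` satisfying the quotient-norm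
identity `π '' B(x, r) = B(π x, r)` (which holds precisely for quotient maps by closed
two-sided ideals, with `J = ker π`). -/
theorem quotient_preserves_open_multiplication
    {𝕜 : Type*} [RCLike 𝕜] {A B : Type*}
    [NormedRing A] [NormedAlgebra 𝕜 A] [CompleteSpace A]
    [NormedRing B] [NormedAlgebra 𝕜 B] [CompleteSpace B]
    (π : A →+* B) (hsurj : Function.Surjective π)
    (hquot : ∀ (x : A) (r : ℝ), π '' Metric.ball x r = Metric.ball (π x) r) :
    -- (1) openness passes to the quotient:
    ((∀ x y : A, ∀ ε > 0, ∃ δ > 0,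
        Metric.ball (x * y) δ ⊆ Metric.ball x ε * Metric.ball y ε) →
      ∀ x y : B, ∀ ε > 0, ∃ δ > 0,
        Metric.ball (x * y) δ ⊆ Metric.ball x ε * Metric.ball y ε) ∧
    -- (2) uniform openness passes to the quotient, with the same modulus δ(ε):
    (∀ ε > 0, ∀ δ > 0,
      (∀ x y : A, Metric.ball (x * y) δ ⊆ Metric.ball x ε * Metric.ball y ε) →
      ∀ x y : B, Metric.ball (x * y) δ ⊆ Metric.ball x ε * Metric.ball y ε) ∧
    -- (3) weak openness passes to the quotient:
    ((∀ x y : A, ∀ ε > 0, (interior (Metric.ball x ε * Metric.ball y ε)).Nonempty) →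
      ∀ x y : B, ∀ ε > 0, (interior (Metric.ball x ε * Metric.ball y ε)).Nonempty) := by
  have hmul : ∀ (s t : Set A), π '' (s * t) = π '' s * π '' t := fun s t =>
    Set.image_mul (π : A →ₙ* B)
  have hball : ∀ (a b : A) (ε : ℝ),
      π '' (Metric.ball a ε * Metric.ball b ε)
        = Metric.ball (π a) ε * Metric.ball (π b) ε := by
    intro a b ε
    rw [hmul, hquot, hquot]
  refine ⟨?_, ?_, ?_⟩
  · intro h x y ε hε
    obtain ⟨a, rfl⟩ := hsurj x
    obtain ⟨b, rfl⟩ := hsurj y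
    obtain ⟨δ, hδ, hsub⟩ := h a b ε hε
    refine ⟨δ, hδ, ?_⟩
    calc Metric.ball (π a * π b) δ = π '' Metric.ball (a * b) δ := by
          rw [hquot, map_mul]
      _ ⊆ π '' (Metric.ball a ε * Metric.ball b ε) := Set.image_mono hsub
      _ = _ := hball a b ε
  · intro ε hε δ hδ h x y
    obtain ⟨a, rfl⟩ := hsurj x
    obtain ⟨b, rfl⟩ := hsurj y
    calc Metric.ball (π a * π b) δ = π '' Metric.ball (a * b) δ := by
          rw [hquot, map_mul]
      _ ⊆ π '' (Metric.ball a ε * Metric.ball b ε) := Set.image_mono (h a b)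
      _ = _ := hball a b ε
  · intro h x y ε hε
    obtain ⟨a, rfl⟩ := hsurj x
    obtain ⟨b, rfl⟩ := hsurj y
    obtain ⟨c, hc⟩ := h a b ε hε
    have hopen : ∀ U : Set A, IsOpen U → IsOpen (π '' U) := by
      intro U hU
      rw [Metric.isOpen_iff]
      rintro _ ⟨u, hu, rfl⟩
      obtain ⟨r, hr, hrU⟩ := Metric.isOpen_iff.1 hU u hu
      exact ⟨r, hr, by rw [← hquot]; exact Set.image_mono hrU⟩
    refine ⟨π c, ?_⟩
    have h1 : π '' interior (Metric.ball a ε * Metric.ball b ε)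
        ⊆ interior (Metric.ball (π a) ε * Metric.ball (π b) ε) := by
      rw [← hball]
      exact interior_maximal (Set.image_mono interior_subset)
        (hopen _ isOpen_interior)
    exact h1 ⟨c, hc, rfl⟩
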